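/- Let X be a Banach space, A a bounded linear operator on X, n a natural number, X₀ ⊆ X a bounded set, and (K_j)_{j=1}^n compact (continuous, mapping bounded sets to precompact sets) maps on X. Define the iterates f_n(x) = (A + K_n)⋯(A + K_1)x. Then for every ε > 0 there exists a finite-dimensional subspace F ⊆ X such that ‖f_n(x)‖ ≥ dist(A^n x, F) − ε for all x ∈ X₀. -/

import Mathlib

open Pointwise


/-- Lower bound for a finite piece of the trajectory: `‖f_n(x)‖ ≥ dist(Aⁿx, F) − ε`
for a suitable finite-dimensional subspace `F`, uniformly over a bounded set `X₀`. -/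
theorem stmt_3 (X : Type*) [NormedAddCommGroup X] [NormedSpace ℂ X] [CompleteSpace X]
    (A : X →L[ℂ] X) (n : ℕ) (K : ℕ → X → X)
    (hK : ∀ j, 1 ≤ j → j ≤ n → Continuous (K j) ∧
      ∀ B : Set X, Bornology.IsBounded B → IsCompact (closure (K j '' B)))
    (f : ℕ → X → X) (hf0 : ∀ x, f 0 x = x)
    (hfs : ∀ j x, f (j + 1) x = A (f j x) + K (j + 1) (f j x))
    (X₀ : Set X) (hX₀ : Bornology.IsBounded X₀)
    (ε : ℝ) (hε : 0 < ε) :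
    ∃ F : Submodule ℂ X, FiniteDimensional ℂ F ∧
      ∀ x ∈ X₀, ‖f n x‖ ≥ Metric.infDist ((A ^ n) x) (F : Set X) - ε := by
  have key : ∀ j, j ≤ n → IsCompact (closure ((fun x => f j x - (A ^ j) x) '' X₀)) := by
    intro j
    induction j with
    | zero =>
      intro _
      have hsub : ((fun x => f 0 x - (A ^ 0) x) '' X₀) ⊆ {(0 : X)} := by
        rintro _ ⟨x, hx, rfl⟩
        simp [hf0]
      exact isCompact_singleton.of_isClosed_subset isClosed_closure
        (closure_minimal hsub isClosed_singleton)
    | succ j ih =>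
      intro hj
      have hj' : j ≤ n := Nat.le_of_succ_le hj
      have hG := ih hj'
      have hbA : Bornology.IsBounded ((A ^ j) '' X₀) :=
        ((A ^ j).lipschitz).isBounded_image hX₀
      have hbG : Bornology.IsBounded ((fun x => f j x - (A ^ j) x) '' X₀) :=
        hG.isBounded.subset subset_closure
      have hbf : Bornology.IsBounded (f j '' X₀) := by
        have hsub : f j '' X₀ ⊆ ((A ^ j) '' X₀) + ((fun x => f j x - (A ^ j) x) '' X₀) := by
          rintro _ ⟨x, hx, rfl⟩
          exact ⟨(A ^ j) x, ⟨x, hx, rfl⟩, f j x - (A ^ j) x, ⟨x, hx, rfl⟩, add_sub_cancel _ _⟩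
        exact (hbA.add hbG).subset hsub
      obtain ⟨hKc, hKcomp⟩ := hK (j + 1) (Nat.succ_le_succ (Nat.zero_le j)) hj
      have hKset : IsCompact (closure (K (j + 1) '' (f j '' X₀))) := hKcomp _ hbf
      have hAset : IsCompact (closure (A '' ((fun x => f j x - (A ^ j) x) '' X₀))) := by
        have h1 : IsCompact (A '' (closure ((fun x => f j x - (A ^ j) x) '' X₀))) :=
          hG.image A.continuous
        exact h1.of_isClosed_subset isClosed_closure
          (closure_minimal (Set.image_mono subset_closure) h1.isClosed)
      have hsub : ((fun x => f (j + 1) x - (A ^ (j + 1)) x) '' X₀) ⊆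
          (A '' ((fun x => f j x - (A ^ j) x) '' X₀)) + (K (j + 1) '' (f j '' X₀)) := by
        rintro _ ⟨x, hx, rfl⟩
        refine ⟨A (f j x - (A ^ j) x), ⟨_, ⟨x, hx, rfl⟩, rfl⟩,
          K (j + 1) (f j x), ⟨f j x, ⟨x, hx, rfl⟩, rfl⟩, ?_⟩
        have hp : (A ^ (j + 1)) x = A ((A ^ j) x) := by
          rw [pow_succ']; rfl
        show A (f j x - (A ^ j) x) + K (j + 1) (f j x) = f (j + 1) x - (A ^ (j + 1)) x
        rw [hfs, map_sub, hp]; abel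
      have hcsum : IsCompact (closure (A '' ((fun x => f j x - (A ^ j) x) '' X₀)) +
          closure (K (j + 1) '' (f j '' X₀))) := hAset.add hKset
      exact hcsum.of_isClosed_subset isClosed_closure
        (closure_minimal (hsub.trans (Set.add_subset_add subset_closure subset_closure))
          hcsum.isClosed)
  have hS := key n le_rfl
  obtain ⟨t, htfin, htsub⟩ := (Metric.totallyBounded_iff.mp hS.totallyBounded) ε hε
  refine ⟨Submodule.span ℂ t, FiniteDimensional.span_of_finite ℂ htfin, ?_⟩
  intro x hx
  have hgx : f n x - (A ^ n) x ∈ closure ((fun x => f n x - (A ^ n) x) '' X₀) :=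
    subset_closure ⟨x, hx, rfl⟩
  obtain ⟨y, hyt, hy⟩ := Set.mem_iUnion₂.mp (htsub hgx)
  have hyF : -y ∈ (Submodule.span ℂ t : Set X) :=
    neg_mem (Submodule.subset_span hyt)
  have h1 : Metric.infDist ((A ^ n) x) (Submodule.span ℂ t : Set X) ≤
      dist ((A ^ n) x) (-y) := Metric.infDist_le_dist_of_mem hyF
  have h2 : dist ((A ^ n) x) (-y) ≤ ‖f n x‖ + ε := by
    have hd : dist (f n x - (A ^ n) x) y < ε := Metric.mem_ball.mp hy
    have : (A ^ n) x - (-y) = f n x - ((f n x - (A ^ n) x) - y) := by abel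
    rw [dist_eq_norm, this]
    calc ‖f n x - ((f n x - (A ^ n) x) - y)‖ ≤ ‖f n x‖ + ‖(f n x - (A ^ n) x) - y‖ :=
          norm_sub_le _ _
      _ ≤ ‖f n x‖ + ε := by
          have := hd; rw [dist_eq_norm] at this; linarith
  linarith [h1.trans h2]
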